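/- Let m ∈ ℕ and 0 ≤ β ≤ α ≤ 1. Let v ∈ h^{-mβ}_0 (so in particular v ∈ h^{-mα}_0), let λ ∈ ℂ, and let a ∈ h^{m(2−α)} satisfy k^{2m}π^{2m} a(k) + Σ_{j∈ℤ} v(k−j) a(j) = λ a(k) for all k ∈ ℤ. Then a ∈ h^{m(2−β)}. In other words, every periodic eigenfunction of the operator (−1)^m d^{2m}/dx^{2m} + V with V ∈ H^{-mβ}_per, considered on the larger domain H^{m(2−α)}_per, already belongs to H^{m(2−β)}_per, so the periodic spectrum does not depend on the choice of α ∈ [β,1]. -/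

import Mathlib

open scoped BigOperators
noncomputable section

/-- The weight `⟨k⟩ = 1 + |k|`. -/
def wt (k : ℤ) : ℝ := 1 + |(k : ℝ)|

/-- `a ∈ h^s`: square-summability of `a` with weight `⟨k⟩^{2s}`. -/
def MemHs (s : ℝ) (a : ℤ → ℂ) : Prop :=
  Summable fun k : ℤ => wt k ^ (2 * s) * ‖a k‖ ^ 2

/-- The `h^s` norm. -/
def hsNorm (s : ℝ) (a : ℤ → ℂ) : ℝ :=
  Real.sqrt (∑' k : ℤ, wt k ^ (2 * s) * ‖a k‖ ^ 2)

/-- `λ` is a periodic eigenvalue of `v`. -/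
def IsPeriodicEigenvalue (m : ℕ) (α : ℝ) (v : ℤ → ℂ) (lam : ℂ) : Prop :=
  ∃ a : ℤ → ℂ, a ≠ 0 ∧ MemHs ((m : ℝ) * (2 - α)) a ∧
    ∀ k : ℤ, (k : ℂ) ^ (2 * m) * (Real.pi : ℂ) ^ (2 * m) * a k
      + ∑' j : ℤ, v (k - j) * a j = lam * a k

/-- `|λ - k^{2m} π^{2m}|`. -/
def diagAbs (m : ℕ) (lam : ℂ) (k : ℤ) : ℝ :=
  ‖lam - (k : ℂ) ^ (2 * m) * (Real.pi : ℂ) ^ (2 * m)‖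

/-- The matrix `S_{mλ}(k,j)`. -/
def Smat (m : ℕ) (v : ℤ → ℂ) (lam : ℂ) (k j : ℤ) : ℂ :=
  v (k - j) / ((Real.sqrt (diagAbs m lam k) * Real.sqrt (diagAbs m lam j) : ℝ) : ℂ)

/-- The matrix `S` defines a bounded operator on `ℓ²(ℤ, ℂ)` of norm at most `c`. -/
def MatOpNormLE (S : ℤ → ℤ → ℂ) (c : ℝ) : Prop :=
  ∃ T : lp (fun _ : ℤ => ℂ) 2 →L[ℂ] lp (fun _ : ℤ => ℂ) 2,
    ‖T‖ ≤ c ∧ ∀ a : lp (fun _ : ℤ => ℂ) 2, ∀ k : ℤ, T a k = ∑' j : ℤ, S k j * a j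

/-- The matrix `S` defines a bounded operator on `ℓ²(ℤ, ℂ)` of norm less than `c`. -/
def MatOpNormLT (S : ℤ → ℤ → ℂ) (c : ℝ) : Prop :=
  ∃ T : lp (fun _ : ℤ => ℂ) 2 →L[ℂ] lp (fun _ : ℤ => ℂ) 2,
    ‖T‖ < c ∧ ∀ a : lp (fun _ : ℤ => ℂ) 2, ∀ k : ℤ, T a k = ∑' j : ℤ, S k j * a j

/-- `Ext_M = {λ : Re λ ≤ |Im λ| - M}`. -/
def ExtSet (M : ℝ) : Set ℂ := {lam : ℂ | lam.re ≤ |lam.im| - M}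

/-- `Vert^m_n(r)`. -/
def VertSet (m n : ℕ) (r : ℝ) : Set ℂ :=
  {lam : ℂ | |(lam - (n : ℂ) ^ (2 * m) * (Real.pi : ℂ) ^ (2 * m)).re| ≤ (n : ℝ) ^ m * Real.pi ^ (2 * m)
    ∧ r ≤ ‖lam - (n : ℂ) ^ (2 * m) * (Real.pi : ℂ) ^ (2 * m)‖}

lemma wt_pos (k : ℤ) : 0 < wt k := by
  have := abs_nonneg ((k : ℝ)); unfold wt; linarith

lemma one_le_wt (k : ℤ) : 1 ≤ wt k := by
  have := abs_nonneg ((k : ℝ)); unfold wt; linarith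

lemma wt_sub_le_add (k j : ℤ) : wt (k - j) ≤ wt k + wt j := by
  unfold wt
  have h : |((k : ℝ) - (j : ℝ))| ≤ |(k : ℝ)| + |(j : ℝ)| := abs_sub _ _
  push_cast
  linarith

lemma wt_sub_le_mul (k j : ℤ) : wt (k - j) ≤ wt k * wt j := by
  unfold wt
  have h : |((k : ℝ) - (j : ℝ))| ≤ |(k : ℝ)| + |(j : ℝ)| := abs_sub _ _
  have h1 := abs_nonneg ((k : ℝ)); have h2 := abs_nonneg ((j : ℝ))
  push_cast
  nlinarith

lemma rpow_sq (k : ℤ) (a : ℝ) : (wt k ^ a) ^ 2 = wt k ^ (2 * a) := by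
  rw [← Real.rpow_natCast (wt k ^ a) 2, ← Real.rpow_mul (wt_pos k).le]
  norm_num [mul_comm]

lemma wt_rpow_nonneg (k : ℤ) (a : ℝ) : 0 ≤ wt k ^ a := Real.rpow_nonneg (wt_pos k).le a

lemma one_le_wt_rpow (k : ℤ) {a : ℝ} (ha : 0 ≤ a) : 1 ≤ wt k ^ a :=
  Real.one_le_rpow (one_le_wt k) ha

lemma wt_rpow_le_one (k : ℤ) {a : ℝ} (ha : a ≤ 0) : wt k ^ a ≤ 1 :=
  Real.rpow_le_one_of_one_le_of_nonpos (one_le_wt k) ha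

lemma wt_rpow_mono (k : ℤ) {a b : ℝ} (h : a ≤ b) : wt k ^ a ≤ wt k ^ b :=
  Real.rpow_le_rpow_of_exponent_le (one_le_wt k) h

lemma wt_rpow_add (k : ℤ) (a b : ℝ) : wt k ^ (a + b) = wt k ^ a * wt k ^ b :=
  Real.rpow_add (wt_pos k) a b

lemma summable_wt_rpow {p : ℝ} (hp : 1 < p) : Summable fun k : ℤ => wt k ^ (-p) := by
  have hnat : Summable fun n : ℕ => ((n : ℝ) + 1) ^ (-p) := by
    have := (Real.summable_nat_rpow (p := -p)).2 (by linarith)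
    exact_mod_cast (summable_nat_add_iff 1).2 this
  apply Summable.of_nat_of_neg
  · refine hnat.congr fun n => ?_
    unfold wt; norm_num [add_comm]
  · refine hnat.congr fun n => ?_
    unfold wt; norm_num [add_comm]

lemma cs_tsum (f g : ℤ → ℝ) (hf : ∀ i, 0 ≤ f i) (hg : ∀ i, 0 ≤ g i)
    (hf2 : Summable fun i => f i ^ 2) (hg2 : Summable fun i => g i ^ 2) :
    (∑' i, f i * g i) ^ 2 ≤ (∑' i, f i ^ 2) * (∑' i, g i ^ 2) := by
  have hfg : Summable fun i => f i * g i := by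
    refine Summable.of_nonneg_of_le (fun i => mul_nonneg (hf i) (hg i))
      (fun i => ?_) ((hf2.add hg2).mul_left (1/2))
    nlinarith [sq_nonneg (f i - g i)]
  have hA : 0 ≤ ∑' i, f i ^ 2 := tsum_nonneg fun i => sq_nonneg _
  have hB : 0 ≤ ∑' i, g i ^ 2 := tsum_nonneg fun i => sq_nonneg _
  have key : ∑' i, f i * g i ≤ Real.sqrt ((∑' i, f i ^ 2) * (∑' i, g i ^ 2)) := by
    refine Summable.tsum_le_of_sum_le hfg fun s => ?_
    have h1 : (∑ i ∈ s, f i * g i) ^ 2 ≤ (∑ i ∈ s, f i ^ 2) * (∑ i ∈ s, g i ^ 2) :=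
      Finset.sum_mul_sq_le_sq_mul_sq s f g
    have h2 : (∑ i ∈ s, f i ^ 2) * (∑ i ∈ s, g i ^ 2) ≤ (∑' i, f i ^ 2) * (∑' i, g i ^ 2) := by
      refine mul_le_mul (Summable.sum_le_tsum s (fun i _ => sq_nonneg _) hf2)
        (Summable.sum_le_tsum s (fun i _ => sq_nonneg _) hg2)
        (Finset.sum_nonneg fun i _ => sq_nonneg _) hA
    have h0 : 0 ≤ ∑ i ∈ s, f i * g i :=
      Finset.sum_nonneg fun i _ => mul_nonneg (hf i) (hg i)
    nlinarith [Real.sq_sqrt (mul_nonneg hA hB), Real.sqrt_nonneg ((∑' i, f i ^ 2) * (∑' i, g i ^ 2))]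
  calc (∑' i, f i * g i) ^ 2 ≤ Real.sqrt ((∑' i, f i ^ 2) * (∑' i, g i ^ 2)) ^ 2 := by
        exact pow_le_pow_left₀ (tsum_nonneg fun i => mul_nonneg (hf i) (hg i)) key 2
    _ = _ := Real.sq_sqrt (mul_nonneg hA hB)

def shearEquiv : (ℤ × ℤ) ≃ (ℤ × ℤ) :=
  ⟨fun p => (p.1 + p.2, p.2), fun p => (p.1 - p.2, p.2),
    fun p => by simp, fun p => by simp⟩

lemma summable_mul_of_sq (p q : ℤ → ℝ)
    (hp : Summable fun i => p i ^ 2) (hq : Summable fun i => q i ^ 2) :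
    Summable fun i => p i * q i := by
  refine Summable.of_abs (Summable.of_nonneg_of_le (fun i => abs_nonneg _)
    (fun i => ?_) ((hp.add hq).mul_left (1/2)))
  rw [abs_mul]
  nlinarith [sq_nonneg (|p i| - |q i|), sq_abs (p i), sq_abs (q i), abs_nonneg (p i), abs_nonneg (q i)]

lemma shift_sq_summable (F : ℤ → ℝ) (hF : Summable fun l => F l ^ 2) (k : ℤ) :
    Summable fun j => F (k - j) ^ 2 :=
  ((Equiv.subLeft k).summable_iff (f := fun l => F l ^ 2)).2 hF

lemma shift_tsum_eq (F : ℤ → ℝ) (k : ℤ) :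
    ∑' j, F (k - j) ^ 2 = ∑' l, F l ^ 2 :=
  (Equiv.subLeft k).tsum_eq (fun l => F l ^ 2)

/-- Young `ℓ² ⋆ ℓ¹ ⊆ ℓ²` (squared, summability form), for nonneg sequences. -/
lemma young_l2_l1 (F q : ℤ → ℝ) (hF0 : ∀ l, 0 ≤ F l) (hq0 : ∀ j, 0 ≤ q j)
    (hF2 : Summable fun l => F l ^ 2) (hq1 : Summable q) :
    Summable fun k : ℤ => (∑' j, F (k - j) * q j) ^ 2 := by
  set B := ∑' l, F l ^ 2 with hB
  have hBnn : 0 ≤ B := tsum_nonneg fun l => sq_nonneg _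
  have hq1nn : 0 ≤ ∑' j, q j := tsum_nonneg hq0
  -- Fubini part
  have hFub : Summable fun k : ℤ => ∑' j, F (k - j) ^ 2 * q j := by
    have hcomp : Summable ((fun p : ℤ × ℤ => F (p.1 - p.2) ^ 2 * q p.2) ∘ shearEquiv) := by
      refine (Summable.mul_of_nonneg hF2 hq1 (fun l => sq_nonneg _) hq0).congr fun p => ?_
      simp [shearEquiv]
    have hfp : Summable (fun p : ℤ × ℤ => F (p.1 - p.2) ^ 2 * q p.2) :=
      (Equiv.summable_iff shearEquiv).1 hcomp
    exact (summable_prod_of_nonneg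
      (fun p => mul_nonneg (sq_nonneg _) (hq0 _))).1 hfp |>.2
  refine Summable.of_nonneg_of_le (fun k => sq_nonneg _) (fun k => ?_)
    (hFub.mul_right (∑' j, q j))
  -- Cauchy-Schwarz with weights √q
  have hsq : ∀ j, Real.sqrt (q j) * Real.sqrt (q j) = q j := fun j => Real.mul_self_sqrt (hq0 j)
  have hf2 : Summable fun j => (F (k - j) * Real.sqrt (q j)) ^ 2 := by
    refine Summable.of_nonneg_of_le (fun j => sq_nonneg _) (fun j => ?_) (hq1.mul_left B)
    have h1 : F (k - j) ^ 2 ≤ B := Summable.le_tsum hF2 (k - j) (fun i _ => sq_nonneg _)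
    calc (F (k - j) * Real.sqrt (q j)) ^ 2 = F (k - j) ^ 2 * q j := by
          rw [mul_pow, Real.sq_sqrt (hq0 j)]
      _ ≤ B * q j := mul_le_mul_of_nonneg_right h1 (hq0 j)
  have hg2 : Summable fun j => (Real.sqrt (q j)) ^ 2 := by
    refine hq1.congr fun j => ?_
    rw [Real.sq_sqrt (hq0 j)]
  have key := cs_tsum (fun j => F (k - j) * Real.sqrt (q j)) (fun j => Real.sqrt (q j))
    (fun j => mul_nonneg (hF0 _) (Real.sqrt_nonneg _)) (fun j => Real.sqrt_nonneg _) hf2 hg2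
  have e1 : ∑' j, (F (k - j) * Real.sqrt (q j)) * Real.sqrt (q j) = ∑' j, F (k - j) * q j := by
    refine tsum_congr fun j => ?_
    rw [mul_assoc, hsq j]
  have e2 : ∑' j, (F (k - j) * Real.sqrt (q j)) ^ 2 = ∑' j, F (k - j) ^ 2 * q j := by
    refine tsum_congr fun j => ?_
    rw [mul_pow, Real.sq_sqrt (hq0 j)]
  have e3 : ∑' j, (Real.sqrt (q j)) ^ 2 = ∑' j, q j := by
    refine tsum_congr fun j => ?_
    rw [Real.sq_sqrt (hq0 j)]
  rw [e1, e2, e3] at key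
  exact key

/-- `ℓ∞` bound for correlation of two `ℓ²` sequences. -/
lemma linf_bound (F q : ℤ → ℝ) (hF0 : ∀ l, 0 ≤ F l) (hq0 : ∀ j, 0 ≤ q j)
    (hF2 : Summable fun l => F l ^ 2) (hq2 : Summable fun j => q j ^ 2) (k : ℤ) :
    (∑' j, F (k - j) * q j) ^ 2 ≤ (∑' l, F l ^ 2) * (∑' j, q j ^ 2) := by
  have key := cs_tsum (fun j => F (k - j)) q (fun j => hF0 _) hq0
    (shift_sq_summable F hF2 k) hq2
  rwa [shift_tsum_eq F k] at key

section conv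
variable (σ u : ℝ) (v a : ℤ → ℂ)

/-- `F`, the `ℓ²` profile of `v`. -/
private def Fv (σ : ℝ) (v : ℤ → ℂ) (l : ℤ) : ℝ := wt l ^ (-σ) * ‖v l‖
/-- `h`, the σ-weighted profile of `a`. -/
private def Ha (σ : ℝ) (a : ℤ → ℂ) (j : ℤ) : ℝ := wt j ^ σ * ‖a j‖

lemma Fv_nonneg (l : ℤ) : 0 ≤ Fv σ v l := mul_nonneg (wt_rpow_nonneg _ _) (norm_nonneg _)
lemma Ha_nonneg (j : ℤ) : 0 ≤ Ha σ a j := mul_nonneg (wt_rpow_nonneg _ _) (norm_nonneg _)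

lemma norm_eq_wt_mul_Fv (l : ℤ) : ‖v l‖ = wt l ^ σ * Fv σ v l := by
  unfold Fv
  rw [← mul_assoc, ← wt_rpow_add]
  simp

lemma Fv_sq_summable (hv : Summable fun k : ℤ => wt k ^ (-(2*σ)) * ‖v k‖^2) :
    Summable fun l => Fv σ v l ^ 2 := by
  refine hv.congr fun l => ?_
  unfold Fv
  rw [mul_pow, rpow_sq, show (2:ℝ) * -σ = -(2*σ) by ring]

lemma Ha_sq_summable (hσu : σ ≤ u)
    (ha : Summable fun k : ℤ => wt k ^ (2*u) * ‖a k‖^2) :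
    Summable fun j => Ha σ a j ^ 2 := by
  refine Summable.of_nonneg_of_le (fun j => sq_nonneg _) (fun j => ?_) ha
  unfold Ha
  rw [mul_pow, rpow_sq]
  exact mul_le_mul_of_nonneg_right (wt_rpow_mono _ (by linarith)) (sq_nonneg _)

/-- `ℓ¹` bound on weighted profile: if `2*(u-σ) > 1` then `Ha σ a ∈ ℓ¹`. -/
lemma Ha_l1 (h1 : σ + 1/2 < u)
    (ha : Summable fun k : ℤ => wt k ^ (2*u) * ‖a k‖^2) :
    Summable fun j => Ha σ a j := by
  have hs : Summable fun j : ℤ => wt j ^ (-(2*(u-σ))) := summable_wt_rpow (by linarith)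
  refine Summable.of_nonneg_of_le (fun j => Ha_nonneg σ a j) (fun j => ?_)
    ((hs.add ha).mul_left (1/2))
  have hx : wt j ^ (σ - u) * (wt j ^ u * ‖a j‖) = Ha σ a j := by
    unfold Ha
    rw [← mul_assoc, ← wt_rpow_add]
    ring_nf
  have hx2 : (wt j ^ (σ - u)) ^ 2 = wt j ^ (-(2*(u-σ))) := by
    rw [rpow_sq, show (2:ℝ) * (σ - u) = -(2*(u-σ)) by ring]
  have hy2 : (wt j ^ u * ‖a j‖) ^ 2 = wt j ^ (2*u) * ‖a j‖^2 := by
    rw [mul_pow, rpow_sq]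
  nlinarith [sq_nonneg (wt j ^ (σ - u) - wt j ^ u * ‖a j‖)]

/-- Main convolution estimate. -/
lemma conv_summable (hσ0 : 0 ≤ σ) (hσu : σ ≤ u)
    (hbr : 1/2 < σ ∨ σ + 1/2 < u)
    (hv : Summable fun k : ℤ => wt k ^ (-(2*σ)) * ‖v k‖^2)
    (ha : Summable fun k : ℤ => wt k ^ (2*u) * ‖a k‖^2) :
    Summable fun k : ℤ => wt k ^ (-(2*σ)) * (∑' j : ℤ, ‖v (k - j)‖ * ‖a j‖)^2 := by
  have hu : 1/2 < u := by rcases hbr with h | h <;> linarith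
  set F : ℤ → ℝ := Fv σ v with hF
  set g : ℤ → ℝ := fun j => ‖a j‖ with hg
  set h : ℤ → ℝ := Ha σ a with hh
  have hF0 : ∀ l, 0 ≤ F l := Fv_nonneg σ v
  have hg0 : ∀ j, 0 ≤ g j := fun j => norm_nonneg _
  have hh0 : ∀ j, 0 ≤ h j := Ha_nonneg σ a
  have hF2 : Summable fun l => F l ^ 2 := Fv_sq_summable σ v hv
  have hh2 : Summable fun j => h j ^ 2 := Ha_sq_summable σ u a hσu ha
  have hg2 : Summable fun j => g j ^ 2 := by
    refine Summable.of_nonneg_of_le (fun j => sq_nonneg _) (fun j => ?_) ha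
    have := one_le_wt_rpow j (a := 2*u) (by linarith)
    nlinarith [sq_nonneg (g j)]
  have hg1 : Summable g := by
    have h0 : Summable fun j : ℤ => Ha 0 a j := Ha_l1 0 u a (by linarith) ha
    refine h0.congr fun j => ?_
    show wt j ^ (0:ℝ) * ‖a j‖ = g j
    rw [Real.rpow_zero, one_mul]
  -- pointwise bound on the summand
  have hpt : ∀ k j : ℤ, ‖v (k - j)‖ * g j ≤
      2^σ * (wt k ^ σ * (F (k - j) * g j) + F (k - j) * h j) := by
    intro k j
    have hvkj : ‖v (k - j)‖ = wt (k - j) ^ σ * F (k - j) := norm_eq_wt_mul_Fv σ v (k - j)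
    have h1 : wt (k - j) ^ σ ≤ 2^σ * (wt k ^ σ + wt j ^ σ) := by
      have c1 : wt (k - j) ^ σ ≤ (wt k + wt j) ^ σ :=
        Real.rpow_le_rpow (wt_pos _).le (wt_sub_le_add k j) hσ0
      have c2 : (wt k + wt j) ^ σ ≤ (2 * max (wt k) (wt j)) ^ σ := by
        refine Real.rpow_le_rpow (by linarith [(wt_pos k).le, (wt_pos j).le]) ?_ hσ0
        rcases le_total (wt k) (wt j) with hc | hc
        · rw [max_eq_right hc]; linarith
        · rw [max_eq_left hc]; linarith
      have c3 : (2 * max (wt k) (wt j)) ^ σ = 2^σ * max (wt k) (wt j) ^ σ :=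
        Real.mul_rpow (by norm_num) (le_max_of_le_left (wt_pos k).le)
      have c4 : max (wt k) (wt j) ^ σ ≤ wt k ^ σ + wt j ^ σ := by
        rcases le_total (wt k) (wt j) with hc | hc
        · rw [max_eq_right hc]
          have := wt_rpow_nonneg k σ; linarith
        · rw [max_eq_left hc]
          have := wt_rpow_nonneg j σ; linarith
      calc wt (k - j) ^ σ ≤ (2 * max (wt k) (wt j)) ^ σ := le_trans c1 c2
        _ = 2^σ * max (wt k) (wt j) ^ σ := c3
        _ ≤ 2^σ * (wt k ^ σ + wt j ^ σ) := by
            refine mul_le_mul_of_nonneg_left c4 (Real.rpow_nonneg (by norm_num) σ)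
    have h2 : wt j ^ σ * g j = h j := rfl
    calc ‖v (k - j)‖ * g j = wt (k - j) ^ σ * (F (k - j) * g j) := by rw [hvkj]; ring
      _ ≤ (2^σ * (wt k ^ σ + wt j ^ σ)) * (F (k - j) * g j) := by
          refine mul_le_mul_of_nonneg_right h1 (mul_nonneg (hF0 _) (hg0 _))
      _ = 2^σ * (wt k ^ σ * (F (k - j) * g j) + F (k - j) * (wt j ^ σ * g j)) := by ring
      _ = 2^σ * (wt k ^ σ * (F (k - j) * g j) + F (k - j) * h j) := by rw [h2]
  -- summability of pieces, per k
  have hFg : ∀ k : ℤ, Summable fun j => F (k - j) * g j := fun k =>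
    summable_mul_of_sq _ _ (shift_sq_summable F hF2 k) hg2
  have hFh : ∀ k : ℤ, Summable fun j => F (k - j) * h j := fun k =>
    summable_mul_of_sq _ _ (shift_sq_summable F hF2 k) hh2
  -- S k ≤ 2^σ (wt k ^ σ * P k + Q k)
  have hS_le : ∀ k : ℤ, (∑' j, ‖v (k - j)‖ * g j) ≤
      2^σ * (wt k ^ σ * (∑' j, F (k - j) * g j) + (∑' j, F (k - j) * h j)) := by
    intro k
    have hRS : Summable fun j => 2^σ * (wt k ^ σ * (F (k - j) * g j) + F (k - j) * h j) :=
      (((hFg k).mul_left (wt k ^ σ)).add (hFh k)).mul_left (2^σ)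
    have hLS : Summable fun j => ‖v (k - j)‖ * g j :=
      Summable.of_nonneg_of_le (fun j => mul_nonneg (norm_nonneg _) (hg0 j)) (hpt k) hRS
    calc (∑' j, ‖v (k - j)‖ * g j)
        ≤ ∑' j, 2^σ * (wt k ^ σ * (F (k - j) * g j) + F (k - j) * h j) :=
          Summable.tsum_le_tsum (hpt k) hLS hRS
      _ = 2^σ * (wt k ^ σ * (∑' j, F (k - j) * g j) + (∑' j, F (k - j) * h j)) := by
          rw [tsum_mul_left, Summable.tsum_add ((hFg k).mul_left (wt k ^ σ)) (hFh k), tsum_mul_left]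
  -- summability of P² and of wt^{-2σ} Q²
  have SP : Summable fun k : ℤ => (∑' j, F (k - j) * g j) ^ 2 :=
    young_l2_l1 F g hF0 hg0 hF2 hg1
  have SQ : Summable fun k : ℤ => wt k ^ (-(2*σ)) * (∑' j, F (k - j) * h j) ^ 2 := by
    rcases hbr with hσhalf | huσ
    · have hD : ∀ k : ℤ, (∑' j, F (k - j) * h j) ^ 2 ≤ (∑' l, F l ^ 2) * (∑' j, h j ^ 2) :=
        linf_bound F h hF0 hh0 hF2 hh2
      refine Summable.of_nonneg_of_le
        (fun k => mul_nonneg (wt_rpow_nonneg _ _) (sq_nonneg _)) (fun k => ?_)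
        ((summable_wt_rpow (p := 2*σ) (by linarith)).mul_left
          ((∑' l, F l ^ 2) * (∑' j, h j ^ 2)))
      calc wt k ^ (-(2*σ)) * (∑' j, F (k - j) * h j) ^ 2
          ≤ wt k ^ (-(2*σ)) * ((∑' l, F l ^ 2) * (∑' j, h j ^ 2)) := by
            exact mul_le_mul_of_nonneg_left (hD k) (wt_rpow_nonneg _ _)
        _ = ((∑' l, F l ^ 2) * (∑' j, h j ^ 2)) * wt k ^ (-(2*σ)) := by ring
    · have hh1 : Summable h := Ha_l1 σ u a huσ ha
      refine Summable.of_nonneg_of_le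
        (fun k => mul_nonneg (wt_rpow_nonneg _ _) (sq_nonneg _)) (fun k => ?_)
        (young_l2_l1 F h hF0 hh0 hF2 hh1)
      have hle1 : wt k ^ (-(2*σ)) ≤ 1 := wt_rpow_le_one k (by linarith)
      nlinarith [sq_nonneg (∑' j, F (k - j) * h j), wt_rpow_nonneg k (-(2*σ))]
  -- final comparison
  refine Summable.of_nonneg_of_le
    (fun k => mul_nonneg (wt_rpow_nonneg _ _) (sq_nonneg _)) (fun k => ?_)
    (((SP.mul_left (2 * (2^σ)^2)).add (SQ.mul_left (2 * (2^σ)^2))))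
  have hSnn : 0 ≤ ∑' j, ‖v (k - j)‖ * g j :=
    tsum_nonneg fun j => mul_nonneg (norm_nonneg _) (hg0 j)
  have hPnn : 0 ≤ ∑' j, F (k - j) * g j :=
    tsum_nonneg fun j => mul_nonneg (hF0 _) (hg0 j)
  have hQnn : 0 ≤ ∑' j, F (k - j) * h j :=
    tsum_nonneg fun j => mul_nonneg (hF0 _) (hh0 j)
  set S := ∑' j, ‖v (k - j)‖ * g j
  set P := ∑' j, F (k - j) * g j
  set Q := ∑' j, F (k - j) * h j
  have hsq : S ^ 2 ≤ (2^σ)^2 * (wt k ^ σ * P + Q) ^ 2 := by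
    have := hS_le k
    nlinarith [mul_nonneg (Real.rpow_nonneg (by norm_num : (0:ℝ) ≤ 2) σ)
      (add_nonneg (mul_nonneg (wt_rpow_nonneg k σ) hPnn) hQnn)]
  have hwPQ : wt k ^ (-(2*σ)) * (wt k ^ σ * P + Q) ^ 2 ≤ 2 * P^2 + 2 * (wt k ^ (-(2*σ)) * Q^2) := by
    have hid : wt k ^ (-(2*σ)) * (wt k ^ σ)^2 = 1 := by
      rw [rpow_sq, ← wt_rpow_add]
      norm_num
    have hexp : (wt k ^ σ * P + Q)^2 ≤ 2 * ((wt k ^ σ)^2 * P^2) + 2 * Q^2 := by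
      nlinarith [sq_nonneg (wt k ^ σ * P - Q)]
    have hw0 : 0 ≤ wt k ^ (-(2*σ)) := wt_rpow_nonneg _ _
    calc wt k ^ (-(2*σ)) * (wt k ^ σ * P + Q) ^ 2
        ≤ wt k ^ (-(2*σ)) * (2 * ((wt k ^ σ)^2 * P^2) + 2 * Q^2) :=
          mul_le_mul_of_nonneg_left hexp hw0
      _ = 2 * ((wt k ^ (-(2*σ)) * (wt k ^ σ)^2) * P^2) + 2 * (wt k ^ (-(2*σ)) * Q^2) := by ring
      _ = 2 * P^2 + 2 * (wt k ^ (-(2*σ)) * Q^2) := by rw [hid]; ring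
  have hw0 : 0 ≤ wt k ^ (-(2*σ)) := wt_rpow_nonneg _ _
  calc wt k ^ (-(2*σ)) * S ^ 2
      ≤ wt k ^ (-(2*σ)) * ((2^σ)^2 * (wt k ^ σ * P + Q) ^ 2) := mul_le_mul_of_nonneg_left hsq hw0
    _ = (2^σ)^2 * (wt k ^ (-(2*σ)) * (wt k ^ σ * P + Q) ^ 2) := by ring
    _ ≤ (2^σ)^2 * (2 * P^2 + 2 * (wt k ^ (-(2*σ)) * Q^2)) := by
        refine mul_le_mul_of_nonneg_left hwPQ (sq_nonneg _)
    _ = 2 * (2^σ)^2 * P^2 + 2 * (2^σ)^2 * (wt k ^ (-(2*σ)) * Q^2) := by ring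

end conv

lemma diag_bound (m : ℕ) (hm : 1 ≤ m) (lam : ℂ) :
    ∃ N : ℕ, 1 ≤ N ∧ ∀ k : ℤ, (N : ℤ) ≤ |k| →
      wt k ^ (2*m) ≤ ‖lam - (k:ℂ)^(2*m) * (Real.pi:ℂ)^(2*m)‖ := by
  refine ⟨⌈‖lam‖⌉₊ + 1, le_add_self, fun k hk => ?_⟩
  set K : ℝ := |(k:ℝ)| with hK
  have hKcast : ((|k| : ℤ) : ℝ) = K := by push_cast [hK]; rfl
  have hKge : (⌈‖lam‖⌉₊ : ℝ) + 1 ≤ K := by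
    have h : (((⌈‖lam‖⌉₊ + 1 : ℕ) : ℤ) : ℝ) ≤ ((|k| : ℤ) : ℝ) := by exact_mod_cast hk
    rw [hKcast] at h; push_cast at h; linarith
  have hlamK : ‖lam‖ + 1 ≤ K := by
    have := Nat.le_ceil ‖lam‖; linarith
  have hK1 : 1 ≤ K := by
    have := Nat.cast_nonneg (α := ℝ) ⌈‖lam‖⌉₊
    linarith
  have habsD : ‖(k:ℂ)^(2*m) * (Real.pi:ℂ)^(2*m)‖ = K^(2*m) * Real.pi^(2*m) := by
    rw [norm_mul, norm_pow, norm_pow, Complex.norm_intCast, Complex.norm_real,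
      Real.norm_eq_abs, abs_of_pos Real.pi_pos]
  have htri : ‖(k:ℂ)^(2*m) * (Real.pi:ℂ)^(2*m)‖ - ‖lam‖
      ≤ ‖lam - (k:ℂ)^(2*m) * (Real.pi:ℂ)^(2*m)‖ := by
    rw [norm_sub_rev]
    exact norm_sub_norm_le _ _
  have hwt : wt k = 1 + K := rfl
  have hKnn : (0:ℝ) ≤ K := by linarith
  have hK2m : (0:ℝ) ≤ K^(2*m) := pow_nonneg hKnn _
  have h2K : (1 + K)^(2*m) ≤ 4^m * K^(2*m) := by
    have h1 : (1 + K) ≤ 2*K := by linarith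
    have h2 : (1 + K)^(2*m) ≤ (2*K)^(2*m) := pow_le_pow_left₀ (by linarith) h1 _
    have h3 : ((2:ℝ)*K)^(2*m) = 4^m * K^(2*m) := by
      rw [mul_pow, pow_mul]; norm_num
    linarith
  have hpi9 : (9:ℝ)^m ≤ Real.pi^(2*m) := by
    rw [pow_mul]
    refine pow_le_pow_left₀ (by norm_num) ?_ m
    nlinarith [Real.pi_gt_three]
  have h4m : (1:ℝ) ≤ 4^m := by
    calc (1:ℝ) = 1^m := (one_pow m).symm
      _ ≤ 4^m := pow_le_pow_left₀ (by norm_num) (by norm_num) m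
  have h9 : (4:ℝ)^m + 1 ≤ 9^m := by
    have h81 : ((8:ℝ))^m ≤ 9^m := pow_le_pow_left₀ (by norm_num) (by norm_num) m
    have h82 : ((8:ℝ))^m = 2^m * 4^m := by rw [← mul_pow]; norm_num
    have h2m : (2:ℝ) ≤ 2^m := by
      calc (2:ℝ) = 2^1 := by norm_num
        _ ≤ 2^m := pow_le_pow_right₀ (by norm_num) hm
    have h4mnn : (0:ℝ) ≤ 4^m := by linarith
    nlinarith
  have hKm : K ≤ K^(2*m) := by
    calc K = K^1 := (pow_one K).symm
      _ ≤ K^(2*m) := pow_le_pow_right₀ hK1 (by omega)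
  have hA : ((4:ℝ)^m + 1) * K^(2*m) ≤ 9^m * K^(2*m) := mul_le_mul_of_nonneg_right h9 hK2m
  have hpiK : (9:ℝ)^m * K^(2*m) ≤ Real.pi^(2*m) * K^(2*m) := mul_le_mul_of_nonneg_right hpi9 hK2m
  rw [hwt]
  refine le_trans ?_ htri
  rw [habsD]
  nlinarith [h2K, hA, hpiK, hKm, hlamK, hK2m]

lemma step (m : ℕ) (hm : 1 ≤ m) (v : ℤ → ℂ) (lam : ℂ) (a : ℤ → ℂ)
    (heq : ∀ k : ℤ, (k : ℂ) ^ (2 * m) * (Real.pi : ℂ) ^ (2 * m) * a k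
      + ∑' j : ℤ, v (k - j) * a j = lam * a k)
    (σ u : ℝ) (hσ0 : 0 ≤ σ) (hσu : σ ≤ u) (hbr : 1/2 < σ ∨ σ + 1/2 < u)
    (hv : Summable fun k : ℤ => wt k ^ (-(2*σ)) * ‖v k‖^2)
    (ha : Summable fun k : ℤ => wt k ^ (2*u) * ‖a k‖^2) :
    Summable fun k : ℤ => wt k ^ (2*(2*(m:ℝ) - σ)) * ‖a k‖^2 := by
  obtain ⟨N, hN1, hND⟩ := diag_bound m hm lam
  have W := conv_summable σ u v a hσ0 hσu hbr hv ha
  have hF2 : Summable fun l => Fv σ v l ^ 2 := Fv_sq_summable σ v hv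
  have hh2 : Summable fun j => Ha σ a j ^ 2 := Ha_sq_summable σ u a hσu ha
  -- absolute summability of the convolution terms
  have hconv : ∀ k : ℤ, Summable fun j => ‖v (k - j) * a j‖ := by
    intro k
    refine Summable.of_nonneg_of_le (fun j => norm_nonneg _) (fun j => ?_)
      ((summable_mul_of_sq (fun j => Fv σ v (k - j)) (Ha σ a)
        (shift_sq_summable _ hF2 k) hh2).mul_left (wt k ^ σ))
    rw [norm_mul, norm_eq_wt_mul_Fv σ v (k - j)]
    have h1 : wt (k - j) ^ σ ≤ wt k ^ σ * wt j ^ σ := by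
      rw [← Real.mul_rpow (wt_pos k).le (wt_pos j).le]
      exact Real.rpow_le_rpow (wt_pos _).le (wt_sub_le_mul k j) hσ0
    have h2 : 0 ≤ Fv σ v (k - j) * ‖a j‖ := mul_nonneg
      (mul_nonneg (wt_rpow_nonneg _ _) (norm_nonneg _)) (norm_nonneg _)
    calc wt (k - j) ^ σ * Fv σ v (k - j) * ‖a j‖
        = wt (k - j) ^ σ * (Fv σ v (k - j) * ‖a j‖) := by ring
      _ ≤ (wt k ^ σ * wt j ^ σ) * (Fv σ v (k - j) * ‖a j‖) :=
          mul_le_mul_of_nonneg_right h1 h2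
      _ = wt k ^ σ * (Fv σ v (k - j) * (wt j ^ σ * ‖a j‖)) := by ring
      _ = wt k ^ σ * (Fv σ v (k - j) * Ha σ a j) := rfl
  -- tail pointwise bound
  have htail : ∀ k : ℤ, (N : ℤ) ≤ |k| →
      wt k ^ (2*(2*(m:ℝ) - σ)) * ‖a k‖^2
        ≤ wt k ^ (-(2*σ)) * (∑' j : ℤ, ‖v (k - j)‖ * ‖a j‖)^2 := by
    intro k hk
    have hD := hND k hk
    have heqk : (∑' j : ℤ, v (k - j) * a j)
        = (lam - (k:ℂ)^(2*m) * (Real.pi:ℂ)^(2*m)) * a k := by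
      have := heq k; rw [sub_mul]; rw [← this]; ring
    have hnorm : ‖lam - (k:ℂ)^(2*m) * (Real.pi:ℂ)^(2*m)‖ * ‖a k‖
        = ‖∑' j : ℤ, v (k - j) * a j‖ := by
      rw [heqk, norm_mul]
    have hle1 : ‖∑' j : ℤ, v (k - j) * a j‖ ≤ ∑' j : ℤ, ‖v (k - j)‖ * ‖a j‖ := by
      refine le_trans (norm_tsum_le_tsum_norm (hconv k)) ?_
      refine le_of_eq (tsum_congr fun j => ?_)
      rw [norm_mul]
    have hpow : (wt k : ℝ) ^ (2*m) = wt k ^ (2*(m:ℝ)) := by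
      rw [← Real.rpow_natCast (wt k) (2*m)]
      norm_num
    have hle2 : wt k ^ (2*(m:ℝ)) * ‖a k‖ ≤ ∑' j : ℤ, ‖v (k - j)‖ * ‖a j‖ := by
      rw [← hpow]
      calc (wt k : ℝ) ^ (2*m) * ‖a k‖
          ≤ ‖lam - (k:ℂ)^(2*m) * (Real.pi:ℂ)^(2*m)‖ * ‖a k‖ :=
            mul_le_mul_of_nonneg_right hD (norm_nonneg _)
        _ = ‖∑' j : ℤ, v (k - j) * a j‖ := hnorm
        _ ≤ _ := hle1
    have hid : wt k ^ (2*(2*(m:ℝ) - σ)) * ‖a k‖^2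
        = wt k ^ (-(2*σ)) * (wt k ^ (2*(m:ℝ)) * ‖a k‖)^2 := by
      rw [mul_pow, rpow_sq, ← mul_assoc, ← wt_rpow_add]
      congr 2
      ring
    rw [hid]
    have hnn : 0 ≤ wt k ^ (2*(m:ℝ)) * ‖a k‖ :=
      mul_nonneg (wt_rpow_nonneg _ _) (norm_nonneg _)
    refine mul_le_mul_of_nonneg_left ?_ (wt_rpow_nonneg _ _)
    exact pow_le_pow_left₀ hnn hle2 2
  -- finite part
  have hfin : Summable fun k : ℤ =>
      (if |k| < (N:ℤ) then wt k ^ (2*(2*(m:ℝ) - σ)) * ‖a k‖^2 else 0) := by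
    refine summable_of_ne_finset_zero (s := Finset.Icc (-(N:ℤ)) (N:ℤ)) (fun k hk => ?_)
    rw [if_neg]
    intro hlt
    exact hk (Finset.mem_Icc.2 ⟨by linarith [(abs_lt.1 hlt).1], by linarith [(abs_lt.1 hlt).2]⟩)
  refine Summable.of_nonneg_of_le
    (fun k => mul_nonneg (wt_rpow_nonneg _ _) (sq_nonneg _)) (fun k => ?_) (W.add hfin)
  by_cases hk : (N : ℤ) ≤ |k|
  · rw [if_neg (by omega)]
    simpa using htail k hk
  · rw [if_pos (by omega)]
    have : 0 ≤ wt k ^ (-(2*σ)) * (∑' j : ℤ, ‖v (k - j)‖ * ‖a j‖)^2 :=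
      mul_nonneg (wt_rpow_nonneg _ _) (sq_nonneg _)
    linarith

theorem statement19 (m : ℕ) (hm : 0 < m) (α β : ℝ)
    (hβ0 : 0 ≤ β) (hβα : β ≤ α) (hα1 : α ≤ 1)
    (v : ℤ → ℂ) (hv : MemHs (-((m : ℝ) * β)) v) (hv0 : v 0 = 0)
    (lam : ℂ) (a : ℤ → ℂ) (ha : MemHs ((m : ℝ) * (2 - α)) a)
    (heq : ∀ k : ℤ, (k : ℂ) ^ (2 * m) * (Real.pi : ℂ) ^ (2 * m) * a k
      + ∑' j : ℤ, v (k - j) * a j = lam * a k) :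
    MemHs ((m : ℝ) * (2 - β)) a := by
  have hm1 : 1 ≤ m := hm
  have hmR : (1:ℝ) ≤ (m:ℝ) := by exact_mod_cast hm1
  have hα0 : 0 ≤ α := le_trans hβ0 hβα
  -- notation
  have hs0 : 0 ≤ (m:ℝ) * β := by positivity
  have hsm : (m:ℝ) * β ≤ (m:ℝ) := by nlinarith
  have htm : (m:ℝ) ≤ (m:ℝ) * (2 - α) := by nlinarith
  -- v in the weighted ℓ² form
  have hv' : Summable fun k : ℤ => wt k ^ (-(2*((m:ℝ)*β))) * ‖v k‖^2 := by
    have := hv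
    unfold MemHs at this
    simpa [show (2 * -((m:ℝ)*β)) = -(2*((m:ℝ)*β)) by ring] using this
  have ha' : Summable fun k : ℤ => wt k ^ (2*((m:ℝ)*(2-α))) * ‖a k‖^2 := ha
  -- first step with σ₁ = max (m β) (3/4)
  set σ₁ : ℝ := max ((m:ℝ)*β) (3/4) with hσ₁
  have hσ₁0 : 0 ≤ σ₁ := le_trans (by norm_num) (le_max_right _ _)
  have hσ₁m : σ₁ ≤ (m:ℝ) := max_le hsm (by linarith)
  have hσ₁t : σ₁ ≤ (m:ℝ)*(2-α) := le_trans hσ₁m htm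
  have hv₁ : Summable fun k : ℤ => wt k ^ (-(2*σ₁)) * ‖v k‖^2 := by
    refine Summable.of_nonneg_of_le (fun k => mul_nonneg (Real.rpow_nonneg
      (by linarith [one_le_wt k]) _) (sq_nonneg _)) (fun k => ?_) hv'
    refine mul_le_mul_of_nonneg_right (wt_rpow_mono k ?_) (sq_nonneg _)
    have : (m:ℝ)*β ≤ σ₁ := le_max_left _ _
    linarith
  have S1 := step m hm1 v lam a heq σ₁ ((m:ℝ)*(2-α)) hσ₁0 hσ₁t
    (Or.inl (lt_of_lt_of_le (by norm_num) (le_max_right _ _))) hv₁ ha'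
  -- second step with σ = m β, u = 2m - σ₁
  have hbr2 : 1/2 < (m:ℝ)*β ∨ (m:ℝ)*β + 1/2 < 2*(m:ℝ) - σ₁ := by
    by_cases hc : 1/2 < (m:ℝ)*β
    · exact Or.inl hc
    · push_neg at hc
      have hmax : σ₁ ≤ 3/4 := max_le (by linarith) (le_refl _)
      exact Or.inr (by linarith)
  have hσu2 : (m:ℝ)*β ≤ 2*(m:ℝ) - σ₁ := by linarith
  have S2 := step m hm1 v lam a heq ((m:ℝ)*β) (2*(m:ℝ) - σ₁) hs0 hσu2 hbr2 hv' S1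
  unfold MemHs
  simpa [show (2 * ((m:ℝ) * (2 - β))) = 2*(2*(m:ℝ) - (m:ℝ)*β) by ring] using S2
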